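/- Let N ≥ 1, let x, y ∈ V_N ∖ ∂_v^int V_N, and let 0 < p_h < 1 and 0 < p_v < 1. Then τ^{f,N}_p(x,y) ≤ Σ_{γ ∈ Γ_{{x,y}}} λ_h^{|γ∩E^h|} · λ_v^{|γ∩E^v|} (Peierls bound). -/

import Mathlib

open MeasureTheory Filter

/-- An edge of the square lattice `ℤ × ℤ`, encoded by its lower-left endpoint `base`
together with its direction: a horizontal edge joins `base` to `base + (1,0)`,
a vertical edge joins `base` to `base + (0,1)`. This encodes exactly the set
`𝔼` of nearest-neighbour edges of `ℤ²`. -/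
structure LatticeEdge where
  base : ℤ × ℤ
  horiz : Bool
deriving DecidableEq

namespace LatticeEdge

/-- First endpoint of an edge. -/
def fst (e : LatticeEdge) : ℤ × ℤ := e.base

/-- Second endpoint of an edge. -/
def snd (e : LatticeEdge) : ℤ × ℤ :=
  if e.horiz then (e.base.1 + 1, e.base.2) else (e.base.1, e.base.2 + 1)

/-- The two endpoints of an edge, as an unordered pair. -/
def ends (e : LatticeEdge) : Sym2 (ℤ × ℤ) := s(e.fst, e.snd)

end LatticeEdge

/-- The graph on `ℤ²` whose edges are the lattice edges belonging to `S`. -/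
def graphOf (S : Set LatticeEdge) : SimpleGraph (ℤ × ℤ) where
  Adj u v := u ≠ v ∧ ∃ e ∈ S, e.ends = s(u, v)
  symm := by
    constructor
    intro u v h
    obtain ⟨hne, e, he, hs⟩ := h
    exact ⟨hne.symm, e, he, hs.trans (Sym2.eq_swap)⟩
  loopless := by
    constructor
    intro u h
    exact h.1 rfl

/-- The graph `(ℤ², 𝔼 ∖ γ)` obtained by deleting the edges of `γ`. -/
def complGraph (γ : Finset LatticeEdge) : SimpleGraph (ℤ × ℤ) :=
  graphOf {e | e ∉ γ}

/-- A finite set `γ` of lattice edges is a *contour* if the graph `(ℤ², 𝔼 ∖ γ)` has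
exactly one finite connected component, and `γ` is minimal with this property:
for every `e ∈ γ`, the graph `(ℤ², 𝔼 ∖ (γ ∖ {e}))` has no finite connected component. -/
def IsContour (γ : Finset LatticeEdge) : Prop :=
  (∃! C : (complGraph γ).ConnectedComponent, C.supp.Finite) ∧
  ∀ e ∈ γ, ∀ C : (graphOf {f | f ∉ γ ∨ f = e}).ConnectedComponent, ¬ C.supp.Finite

/-- A contour `γ` *surrounds* a set `X ⊆ ℤ²` of vertices if `X` is contained in the
vertex set `I_γ` of the (unique) finite connected component of `(ℤ², 𝔼 ∖ γ)`. -/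
def Surrounds (γ : Finset LatticeEdge) (X : Set (ℤ × ℤ)) : Prop :=
  IsContour γ ∧ ∃ C : (complGraph γ).ConnectedComponent, C.supp.Finite ∧ X ⊆ C.supp

/-- `Γ^n_X` : the set of contours of cardinality `n` surrounding `X`. -/
def GammaN (X : Set (ℤ × ℤ)) (n : ℕ) : Set (Finset LatticeEdge) :=
  {γ | Surrounds γ X ∧ γ.card = n}

/-- `‖x‖ = 2(x₁ + x₂ + 2)`, the cardinality of a minimal contour surrounding `{0, x}`. -/
def normC (x : ℤ × ℤ) : ℕ := (2 * (x.1 + x.2 + 2)).toNat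

/-- `β_x` : the number of minimal contours surrounding `{0, x}`. -/
noncomputable def betaX (x : ℤ × ℤ) : ℕ := Nat.card ↥(GammaN {0, x} (normC x))

/-- Number of horizontal edges of `γ`, i.e. `|γ ∩ 𝔼ʰ|`. -/
def hCount (γ : Finset LatticeEdge) : ℕ := (γ.filter fun e => e.horiz = true).card

/-- Number of vertical edges of `γ`, i.e. `|γ ∩ 𝔼ᵛ|`. -/
def vCount (γ : Finset LatticeEdge) : ℕ := (γ.filter fun e => e.horiz = false).card

/-- The dual edge `e*` of a lattice edge `e`.  We identify the dual lattice
`ℤ² + (1/2, 1/2)` with `ℤ²` via `(a,b) ↦ (a + 1/2, b + 1/2)`; under this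
identification the dual edge crossing the horizontal edge `(a,b)–(a+1,b)` joins
`(a, b-1)` to `(a, b)` (a vertical dual edge), and the dual edge crossing the
vertical edge `(a,b)–(a,b+1)` joins `(a-1, b)` to `(a, b)` (a horizontal dual edge). -/
def dualEdge (e : LatticeEdge) : LatticeEdge :=
  if e.horiz then ⟨(e.base.1, e.base.2 - 1), false⟩ else ⟨(e.base.1 - 1, e.base.2), true⟩

/-- A finite set `S` of (dual) lattice edges is a *circuit* if it is the edge set of a
closed self-avoiding path: there are `n ≥ 3` distinct vertices `c 0, …, c (n-1)`,
cyclically consecutive ones being joined by an edge of `S`, and every edge of `S` arising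
this way. -/
def IsCircuit (S : Finset LatticeEdge) : Prop :=
  ∃ n : ℕ, 3 ≤ n ∧ ∃ c : ZMod n → ℤ × ℤ, Function.Injective c ∧
    (∀ i : ZMod n, ∃ e ∈ S, e.ends = s(c i, c (i + 1))) ∧
    (∀ e ∈ S, ∃ i : ZMod n, e.ends = s(c i, c (i + 1)))

/-- The dual edge `e_k*` joining `(k - 1/2, -1/2)` to `(k - 1/2, 1/2)`; in our
identification of the dual lattice with `ℤ²` this is the vertical dual edge with base
`(k-1, -1)`, i.e. the dual of the horizontal edge `(k-1, 0)–(k, 0)`. -/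
def ekStar (k : ℤ) : LatticeEdge := ⟨(k - 1, -1), false⟩

/-- The probability that the edge `e` is open: `p_h` for horizontal edges and `p_v`
for vertical ones. -/
noncomputable def edgeProb (ph pv : ℝ) (e : LatticeEdge) : ℝ := if e.horiz then ph else pv

/-- `P` is the Bernoulli product measure `P_{(p_h, p_v)}` on configurations
`ω ∈ {0,1}^𝔼` (encoded as `LatticeEdge → Bool`, `true` = open): it is a probability
measure and, for every finite set of edges, the states of those edges are independent
Bernoulli variables with the correct parameters.  These cylinder probabilities
characterize the product measure uniquely. -/
def IsBernoulliProduct (ph pv : ℝ) (P : Measure (LatticeEdge → Bool)) : Prop :=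
  IsProbabilityMeasure P ∧
    ∀ (F : Finset LatticeEdge) (σ : LatticeEdge → Bool),
      P {ω | ∀ e ∈ F, ω e = σ e} =
        ∏ e ∈ F, ENNReal.ofReal
          (if σ e then edgeProb ph pv e else 1 - edgeProb ph pv e)

/-- The graph of open edges of the configuration `ω`. -/
def openGraph (ω : LatticeEdge → Bool) : SimpleGraph (ℤ × ℤ) :=
  graphOf {e | ω e = true}

/-- `x` and `y` belong to the same finite open cluster of the configuration `ω`. -/
def SameFiniteCluster (ω : LatticeEdge → Bool) (x y : ℤ × ℤ) : Prop :=
  ∃ C : (openGraph ω).ConnectedComponent, x ∈ C.supp ∧ y ∈ C.supp ∧ C.supp.Finite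

/-- The truncated (finite) connectivity `τ^f_p(x,y)`: the probability that `x` and `y`
belong to the same finite open cluster. -/
noncomputable def tauF (P : Measure (LatticeEdge → Bool)) (x y : ℤ × ℤ) : ℝ :=
  (P {ω | SameFiniteCluster ω x y}).toReal

/-- The box `V_N = ([-N,N] × [-N,N]) ∩ ℤ²`. -/
def VN (N : ℕ) : Set (ℤ × ℤ) := {v | |v.1| ≤ (N : ℤ) ∧ |v.2| ≤ (N : ℤ)}

/-- The interior vertex boundary `∂_v^int V_N = {x ∈ V_N : d(x, ℤ² ∖ V_N) = 1}`. -/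
def intBdry (N : ℕ) : Set (ℤ × ℤ) :=
  {v | (|v.1| ≤ (N : ℤ) ∧ |v.2| ≤ (N : ℤ)) ∧ (|v.1| = (N : ℤ) ∨ |v.2| = (N : ℤ))}

/-- `e ∈ E_N`: both endpoints of `e` lie in `V_N`. -/
def edgeInBox (N : ℕ) (e : LatticeEdge) : Prop := e.fst ∈ VN N ∧ e.snd ∈ VN N

/-- The graph on `(V_N, open edges of E_N)` (vertices outside `V_N` are isolated). -/
def openGraphN (N : ℕ) (ω : LatticeEdge → Bool) : SimpleGraph (ℤ × ℤ) :=
  graphOf {e | edgeInBox N e ∧ ω e = true}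

/-- The finite-volume event defining `τ^{f,N}_p(x,y)`: there is an open cluster `A` of
`(V_N, open edges of E_N)` with `{x,y} ⊆ V_A` and `V_A ∩ ∂_v^int V_N = ∅`. -/
def FiniteVolEvent (N : ℕ) (x y : ℤ × ℤ) (ω : LatticeEdge → Bool) : Prop :=
  ∃ C : (openGraphN N ω).ConnectedComponent,
    x ∈ C.supp ∧ y ∈ C.supp ∧ C.supp ∩ intBdry N = ∅

/-- The finite-volume finite connectivity `τ^{f,N}_p(x,y)`. -/
noncomputable def tauFN (P : Measure (LatticeEdge → Bool)) (N : ℕ) (x y : ℤ × ℤ) : ℝ :=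
  (P {ω | FiniteVolEvent N x y ω}).toReal

/-- `λ = (1-p)/p`. -/
noncomputable def lam (p : ℝ) : ℝ := (1 - p) / p

/-- The threshold `η̃(p_h, x₁, x₂)` from the paper. -/
noncomputable def etaTilde (ph : ℝ) (x1 x2 : ℤ) : ℝ :=
  ((betaX (x1, x2) : ℝ) * ph ^ (4 * (x1 + x2 + 2)) /
      ((4 ^ 3 * lam ph) ^ (x1 + x2 + 3) / (1 - 4 ^ 3 * lam ph) +
        (betaX (x1, x2) : ℝ) * (1 + 12 * lam ph) ^ (2 * (x1 + x2 + 2)))) ^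
    (1 / (2 * ((x2 : ℝ) - (x1 : ℝ))))

/- ======================= Auxiliary development ======================= -/

namespace PeierlsAux

lemma fst_ne_snd (e : LatticeEdge) : e.fst ≠ e.snd := by
  unfold LatticeEdge.fst LatticeEdge.snd
  rcases h : e.horiz <;> simp [h, Prod.ext_iff]

lemma ends_cases {e : LatticeEdge} {u v : ℤ × ℤ} (h : e.ends = s(u, v)) :
    (u = e.fst ∧ v = e.snd) ∨ (u = e.snd ∧ v = e.fst) := by
  rw [LatticeEdge.ends, Sym2.eq_iff] at h
  tauto

lemma snd_rel (e : LatticeEdge) :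
    (e.snd.1 = e.fst.1 + 1 ∧ e.snd.2 = e.fst.2) ∨
    (e.snd.1 = e.fst.1 ∧ e.snd.2 = e.fst.2 + 1) := by
  unfold LatticeEdge.fst LatticeEdge.snd
  rcases h : e.horiz <;> simp [h]

lemma ends_swap (e : LatticeEdge) {u v : ℤ × ℤ} (h : e.ends = s(u, v)) :
    e.ends = s(v, u) := h.trans (Sym2.eq_swap)

lemma graphOf_adj_of_ends {S : Set LatticeEdge} {e : LatticeEdge} {u v : ℤ × ℤ}
    (he : e ∈ S) (h : e.ends = s(u, v)) : (graphOf S).Adj u v := by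
  refine ⟨?_, e, he, h⟩
  rcases ends_cases h with ⟨h1, h2⟩ | ⟨h1, h2⟩
  · rw [h1, h2]; exact fst_ne_snd e
  · rw [h1, h2]; exact (fst_ne_snd e).symm

/-- Reachability within a vertex set `S`, using lattice edges. -/
inductive ReachIn (S : Set (ℤ × ℤ)) : ℤ × ℤ → ℤ × ℤ → Prop
  | refl (v : ℤ × ℤ) (hv : v ∈ S) : ReachIn S v v
  | tail {u v w : ℤ × ℤ} (h : ReachIn S u v) (e : LatticeEdge) (he : e.ends = s(v, w))
      (hw : w ∈ S) : ReachIn S u w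

namespace ReachIn

lemma mem_left {S : Set (ℤ × ℤ)} {u v : ℤ × ℤ} (h : ReachIn S u v) : u ∈ S := by
  induction h with
  | refl hv => exact hv
  | tail h e he hw ih => exact ih

lemma mem_right {S : Set (ℤ × ℤ)} {u v : ℤ × ℤ} (h : ReachIn S u v) : v ∈ S := by
  induction h with
  | refl hv => exact hv
  | tail h e he hw ih => exact hw

lemma trans {S : Set (ℤ × ℤ)} {u v w : ℤ × ℤ} (h1 : ReachIn S u v) (h2 : ReachIn S v w) :
    ReachIn S u w := by
  induction h2 with
  | refl hv => exact h1
  | tail h e he hw ih => exact ReachIn.tail ih e he hw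

lemma symm {S : Set (ℤ × ℤ)} {u v : ℤ × ℤ} (h : ReachIn S u v) : ReachIn S v u := by
  induction h with
  | refl hv => exact ReachIn.refl _ hv
  | tail h e he hw ih =>
      exact ReachIn.trans (ReachIn.tail (ReachIn.refl _ hw) e (ends_swap e he) h.mem_right) ih

lemma mono {S T : Set (ℤ × ℤ)} (hST : S ⊆ T) {u v : ℤ × ℤ} (h : ReachIn S u v) :
    ReachIn T u v := by
  induction h with
  | refl hv => exact ReachIn.refl _ (hST hv)
  | tail h e he hw ih => exact ReachIn.tail ih e he (hST hw)

lemma to_reachable {S : Set (ℤ × ℤ)} {G : SimpleGraph (ℤ × ℤ)}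
    (hG : ∀ a b : ℤ × ℤ, ∀ e : LatticeEdge, a ∈ S → b ∈ S → e.ends = s(a, b) → G.Adj a b)
    {u v : ℤ × ℤ} (h : ReachIn S u v) : G.Reachable u v := by
  induction h with
  | refl hv => exact SimpleGraph.Reachable.refl _
  | tail h e he hw ih => exact ih.trans (hG _ _ e h.mem_right hw he).reachable

end ReachIn

lemma reach_right (S : Set (ℤ × ℤ)) (a b : ℤ) (n : ℕ)
    (h : ∀ k : ℕ, k ≤ n → (((a + k : ℤ), b) : ℤ × ℤ) ∈ S) :
    ReachIn S (a, b) ((a + n : ℤ), b) := by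
  induction n with
  | zero =>
      have h0 := h 0 le_rfl
      simp only [Nat.cast_zero, add_zero] at h0 ⊢
      exact ReachIn.refl _ h0
  | succ m ih =>
      have r := ih fun k hk => h k (hk.trans (Nat.le_succ m))
      have hcast : ((a + ((m : ℕ) + 1 : ℕ) : ℤ), b) = (((a + m : ℤ) + 1 : ℤ), b) := by
        push_cast
        rw [add_assoc]
      rw [hcast]
      have he : (⟨((a + m : ℤ), b), true⟩ : LatticeEdge).ends =
          s(((a + m : ℤ), b), (((a + m : ℤ) + 1 : ℤ), b)) := by
        simp [LatticeEdge.ends, LatticeEdge.fst, LatticeEdge.snd]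
      refine ReachIn.tail r _ he ?_
      have h1 := h (m + 1) le_rfl
      rw [hcast] at h1
      exact h1

lemma reach_up (S : Set (ℤ × ℤ)) (a b : ℤ) (n : ℕ)
    (h : ∀ k : ℕ, k ≤ n → ((a, (b + k : ℤ)) : ℤ × ℤ) ∈ S) :
    ReachIn S (a, b) (a, (b + n : ℤ)) := by
  induction n with
  | zero =>
      have h0 := h 0 le_rfl
      simp only [Nat.cast_zero, add_zero] at h0 ⊢
      exact ReachIn.refl _ h0
  | succ m ih =>
      have r := ih fun k hk => h k (hk.trans (Nat.le_succ m))
      have hcast : (a, (b + ((m : ℕ) + 1 : ℕ) : ℤ)) = (a, ((b + m : ℤ) + 1 : ℤ)) := by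
        push_cast
        rw [add_assoc]
      rw [hcast]
      have he : (⟨(a, (b + m : ℤ)), false⟩ : LatticeEdge).ends =
          s((a, (b + m : ℤ)), (a, ((b + m : ℤ) + 1 : ℤ))) := by
        simp [LatticeEdge.ends, LatticeEdge.fst, LatticeEdge.snd]
      refine ReachIn.tail r _ he ?_
      have h1 := h (m + 1) le_rfl
      rw [hcast] at h1
      exact h1

lemma reach_horiz (S : Set (ℤ × ℤ)) (a c b : ℤ)
    (h : ∀ t : ℤ, (a ≤ t ∧ t ≤ c) ∨ (c ≤ t ∧ t ≤ a) → ((t, b) : ℤ × ℤ) ∈ S) :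
    ReachIn S (a, b) (c, b) := by
  rcases le_total a c with hac | hac
  · have r := reach_right S a b (c - a).toNat
      (fun k hk => h (a + k) (by left; omega))
    have heq : (a + ((c - a).toNat : ℤ)) = c := by omega
    rwa [heq] at r
  · have r := reach_right S c b (a - c).toNat
      (fun k hk => h (c + k) (by right; omega))
    have heq : (c + ((a - c).toNat : ℤ)) = a := by omega
    rw [heq] at r
    exact r.symm

lemma reach_vert (S : Set (ℤ × ℤ)) (a b d : ℤ)
    (h : ∀ t : ℤ, (b ≤ t ∧ t ≤ d) ∨ (d ≤ t ∧ t ≤ b) → ((a, t) : ℤ × ℤ) ∈ S) :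
    ReachIn S (a, b) (a, d) := by
  rcases le_total b d with hbd | hbd
  · have r := reach_up S a b (d - b).toNat
      (fun k hk => h (b + k) (by left; omega))
    have heq : (b + ((d - b).toNat : ℤ)) = d := by omega
    rwa [heq] at r
  · have r := reach_up S a d (b - d).toNat
      (fun k hk => h (d + k) (by right; omega))
    have heq : (d + ((b - d).toNat : ℤ)) = b := by omega
    rw [heq] at r
    exact r.symm

lemma reach_univ (u v : ℤ × ℤ) : ReachIn Set.univ u v := by
  have h1 : ReachIn Set.univ (u.1, u.2) (v.1, u.2) :=
    reach_horiz _ _ _ _ (fun _ _ => Set.mem_univ _)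
  have h2 : ReachIn Set.univ (v.1, u.2) (v.1, v.2) :=
    reach_vert _ _ _ _ (fun _ _ => Set.mem_univ _)
  exact h1.trans h2

/-- If a lattice path starts outside `T` then either it avoids `T` entirely, or it
first enters `T` through some edge. -/
lemma reach_enter {T : Set (ℤ × ℤ)} {v u : ℤ × ℤ} (h : ReachIn Set.univ v u) (hv : v ∉ T) :
    ReachIn Tᶜ v u ∨
      ∃ a ∈ T, ∃ b ∈ Tᶜ, (∃ e : LatticeEdge, e.ends = s(b, a)) ∧ ReachIn Tᶜ v b := by
  induction h with
  | refl hw => exact Or.inl (ReachIn.refl _ hv)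
  | tail h e he hw ih =>
      rename_i vmid wend
      rcases ih with r | hr
      · by_cases hwT : wend ∈ T
        · exact Or.inr ⟨wend, hwT, vmid, r.mem_right, ⟨e, he⟩, r⟩
        · exact Or.inl (ReachIn.tail r e he hwT)
      · exact Or.inr hr

lemma walk_stays {G : SimpleGraph (ℤ × ℤ)} {I : Set (ℤ × ℤ)}
    (hcl : ∀ a b : ℤ × ℤ, a ∈ I → G.Adj a b → b ∈ I) {u v : ℤ × ℤ}
    (w : G.Walk u v) : u ∈ I → v ∈ I := by
  induction w with
  | nil => exact id
  | cons hadj p ih => exact fun hu => ih (hcl _ _ hu hadj)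

lemma reachable_endpoint {G : SimpleGraph (ℤ × ℤ)} {u v : ℤ × ℤ} (h : G.Reachable u v) :
    u = v ∨ ∃ z, G.Adj v z := by
  obtain ⟨w⟩ := h
  induction w with
  | nil => exact Or.inl rfl
  | cons hadj p ih =>
      rcases ih with rfl | hz
      · exact Or.inr ⟨_, hadj.symm⟩
      · exact Or.inr hz

instance : Countable LatticeEdge := by
  have hinj : Function.Injective (fun e : LatticeEdge => (e.base, e.horiz)) := by
    intro a b h
    cases a; cases b; simpa using h
  exact hinj.countable

/-- The key combinatorial lemma: on the finite-volume event there is a contour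
surrounding `{x, y}` all of whose edges are closed. -/
lemma exists_closed_contour (N : ℕ) (hN : 1 ≤ N) (x y : ℤ × ℤ)
    (hx : x ∈ VN N \ intBdry N) (hy : y ∈ VN N \ intBdry N)
    (ω : LatticeEdge → Bool) (hE : FiniteVolEvent N x y ω) :
    ∃ γ : Finset LatticeEdge, Surrounds γ {x, y} ∧ ∀ e ∈ γ, ω e = false := by
  classical
  obtain ⟨C, hxC, hyC, hbd⟩ := hE
  set A : Set (ℤ × ℤ) := C.supp with hA
  set M : ℤ := (N : ℤ) - 1 with hM
  have hMnn : 0 ≤ M := by omega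
  have hxA : x ∈ A := hxC
  have hyA : y ∈ A := hyC
  have hCx : (openGraphN N ω).connectedComponentMk x = C :=
    (SimpleGraph.ConnectedComponent.mem_supp_iff C x).mp hxA
  -- membership in A ↔ reachable from x
  have hmemA : ∀ v, v ∈ A ↔ (openGraphN N ω).Reachable x v := by
    intro v
    have hiff : v ∈ A ↔ (openGraphN N ω).connectedComponentMk v = C :=
      SimpleGraph.ConnectedComponent.mem_supp_iff C v
    rw [hiff, ← hCx]
    exact ⟨fun h => (SimpleGraph.ConnectedComponent.eq.mp h).symm,
      fun h => SimpleGraph.ConnectedComponent.eq.mpr h.symm⟩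
  have hAadj : ∀ a b : ℤ × ℤ, a ∈ A → (openGraphN N ω).Adj a b → b ∈ A := fun a b ha h =>
    (hmemA b).mpr (((hmemA a).mp ha).trans h.reachable)
  -- A lies in the box of radius M
  have hAbox : ∀ v ∈ A, -M ≤ v.1 ∧ v.1 ≤ M ∧ -M ≤ v.2 ∧ v.2 ≤ M := by
    intro v hv
    have hVN : v ∈ VN N := by
      rcases reachable_endpoint ((hmemA v).mp hv) with rfl | ⟨z, hadj⟩
      · exact hx.1
      · obtain ⟨hne, e, ⟨hbox, _⟩, hends⟩ := hadj
        rcases ends_cases hends with ⟨h1, _⟩ | ⟨h1, _⟩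
        · rw [h1]; exact hbox.1
        · rw [h1]; exact hbox.2
    have hnb : v ∉ intBdry N := by
      intro hb
      have hmem : v ∈ C.supp ∩ intBdry N := ⟨hv, hb⟩
      rw [hbd] at hmem
      exact hmem
    rw [VN, Set.mem_setOf_eq, abs_le, abs_le] at hVN
    rw [intBdry, Set.mem_setOf_eq] at hnb
    push_neg at hnb
    have hne := hnb ⟨abs_le.mpr ⟨hVN.1.1, hVN.1.2⟩, abs_le.mpr ⟨hVN.2.1, hVN.2.2⟩⟩
    have h1 := abs_lt.mp (lt_of_le_of_ne (abs_le.mpr ⟨hVN.1.1, hVN.1.2⟩) hne.1)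
    have h2 := abs_lt.mp (lt_of_le_of_ne (abs_le.mpr ⟨hVN.2.1, hVN.2.2⟩) hne.2)
    omega
  -- the outside region and W
  set corner : ℤ × ℤ := ((M + 1 : ℤ), (M + 1 : ℤ)) with hcorner
  set W : Set (ℤ × ℤ) := {v | ReachIn Aᶜ v corner} with hWdef
  set I : Set (ℤ × ℤ) := Wᶜ with hIdef
  have hWAc : ∀ v ∈ W, v ∉ A := fun v hv => hv.mem_left
  have hAI : ∀ v ∈ A, v ∈ I := fun v hv hvW => hWAc v hvW hv
  set Out : Set (ℤ × ℤ) := {v | M < v.1 ∨ v.1 < -M ∨ M < v.2 ∨ v.2 < -M} with hOutdef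
  have hOutA : Out ⊆ Aᶜ := by
    intro v hv hvA
    have := hAbox v hvA
    rw [hOutdef, Set.mem_setOf_eq] at hv
    omega
  have houter : ∀ v : ℤ × ℤ, (M < v.1 ∨ v.1 < -M ∨ M < v.2 ∨ v.2 < -M) → v ∈ W := by
    intro v hv
    have hr : ReachIn Out v corner := by
      have hveta : v = (v.1, v.2) := rfl
      rcases hv with h | h | h | h
      · have r1 : ReachIn Out (v.1, v.2) (v.1, M + 1) :=
          reach_vert Out v.1 v.2 (M + 1) (fun t _ => by rw [hOutdef]; left; exact h)
        have r2 : ReachIn Out (v.1, M + 1) corner :=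
          reach_horiz Out v.1 (M + 1) (M + 1)
            (fun t _ => by rw [hOutdef]; right; right; left; omega)
        rw [hveta]; exact r1.trans r2
      · have r1 : ReachIn Out (v.1, v.2) (v.1, M + 1) :=
          reach_vert Out v.1 v.2 (M + 1) (fun t _ => by rw [hOutdef]; right; left; exact h)
        have r2 : ReachIn Out (v.1, M + 1) corner :=
          reach_horiz Out v.1 (M + 1) (M + 1)
            (fun t _ => by rw [hOutdef]; right; right; left; omega)
        rw [hveta]; exact r1.trans r2
      · have r1 : ReachIn Out (v.1, v.2) (M + 1, v.2) :=
          reach_horiz Out v.1 (M + 1) v.2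
            (fun t _ => by rw [hOutdef]; right; right; left; exact h)
        have r2 : ReachIn Out (M + 1, v.2) corner :=
          reach_vert Out (M + 1) v.2 (M + 1) (fun t _ => by rw [hOutdef]; left; omega)
        rw [hveta]; exact r1.trans r2
      · have r1 : ReachIn Out (v.1, v.2) (M + 1, v.2) :=
          reach_horiz Out v.1 (M + 1) v.2
            (fun t _ => by rw [hOutdef]; right; right; right; exact h)
        have r2 : ReachIn Out (M + 1, v.2) corner :=
          reach_vert Out (M + 1) v.2 (M + 1) (fun t _ => by rw [hOutdef]; left; omega)
        rw [hveta]; exact r1.trans r2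
    exact hr.mono hOutA
  have hIbox : ∀ v ∈ I, -M ≤ v.1 ∧ v.1 ≤ M ∧ -M ≤ v.2 ∧ v.2 ≤ M := by
    intro v hv
    by_contra hc
    exact hv (houter v (by omega))
  have hIfin : I.Finite := by
    apply Set.Finite.subset ((Set.finite_Icc (-M) M).prod (Set.finite_Icc (-M) M))
    intro v hv
    have hb := hIbox v hv
    exact ⟨Set.mem_Icc.mpr ⟨hb.1, hb.2.1⟩, Set.mem_Icc.mpr ⟨hb.2.2.1, hb.2.2.2⟩⟩
  have hWext : ∀ v w : ℤ × ℤ, ∀ e : LatticeEdge, v ∈ W → w ∉ A → e.ends = s(v, w) →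
      w ∈ W := by
    intro v w e hv hw he
    exact (ReachIn.tail (ReachIn.refl w hw) e (ends_swap e he) hv.mem_left).trans hv
  -- the contour: edges crossing between I and W
  set cross : Set LatticeEdge :=
    {e | (e.fst ∈ I ∧ e.snd ∈ W) ∨ (e.fst ∈ W ∧ e.snd ∈ I)} with hcrossdef
  have hcrossfin : cross.Finite := by
    have hbig : ((Set.Icc (-(M + 1)) (M + 1)) ×ˢ (Set.Icc (-(M + 1)) (M + 1))).Finite :=
      (Set.finite_Icc _ _).prod (Set.finite_Icc _ _)
    apply Set.Finite.subset ((hbig.prod (Set.finite_univ (α := Bool))).image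
      (fun p : (ℤ × ℤ) × Bool => LatticeEdge.mk p.1 p.2))
    intro e he
    refine ⟨(e.base, e.horiz), ⟨?_, Set.mem_univ _⟩, by cases e; rfl⟩
    have hbase : e.base = e.fst := rfl
    have hrel := snd_rel e
    have hok : -(M + 1) ≤ e.base.1 ∧ e.base.1 ≤ M + 1 ∧
        -(M + 1) ≤ e.base.2 ∧ e.base.2 ≤ M + 1 := by
      rcases he with ⟨hfI, _⟩ | ⟨_, hsI⟩
      · have hb := hIbox _ hfI
        rw [hbase]; omega
      · have hb := hIbox _ hsI
        rw [hbase]; omega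
    exact ⟨Set.mem_Icc.mpr ⟨hok.1, hok.2.1⟩, Set.mem_Icc.mpr ⟨hok.2.2.1, hok.2.2.2⟩⟩
  set γ : Finset LatticeEdge := hcrossfin.toFinset with hγdef
  have hγmem : ∀ e, e ∈ γ ↔ e ∈ cross := fun e => Set.Finite.mem_toFinset _
  -- each contour edge has one endpoint in A and the other in W
  have hcrossA : ∀ e ∈ γ, ∃ u w : ℤ × ℤ,
      ((u = e.fst ∧ w = e.snd) ∨ (u = e.snd ∧ w = e.fst)) ∧ u ∈ A ∧ w ∈ W := by
    intro e he
    rw [hγmem] at he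
    rcases he with ⟨hfI, hsW⟩ | ⟨hfW, hsI⟩
    · refine ⟨e.fst, e.snd, Or.inl ⟨rfl, rfl⟩, ?_, hsW⟩
      by_contra hfA
      exact hfI (hWext e.snd e.fst e hsW hfA
        (show e.ends = s(e.snd, e.fst) from Sym2.eq_swap))
    · refine ⟨e.snd, e.fst, Or.inr ⟨rfl, rfl⟩, ?_, hfW⟩
      by_contra hsA
      exact hsI (hWext e.fst e.snd e hfW hsA rfl)
  -- contour edges are closed
  have hclosed : ∀ e ∈ γ, ω e = false := by
    intro e he
    obtain ⟨u, w, hor, huA, hwW⟩ := hcrossA e he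
    by_contra hopen
    have hωe : ω e = true := by revert hopen; cases ω e <;> simp
    have huM := hAbox u huA
    have hrel := snd_rel e
    have hwbox : -(M + 1) ≤ w.1 ∧ w.1 ≤ M + 1 ∧ -(M + 1) ≤ w.2 ∧ w.2 ≤ M + 1 := by
      rcases hor with ⟨h1, h2⟩ | ⟨h1, h2⟩ <;> rw [h1] at huM <;> rw [h2] <;> omega
    have hbox : edgeInBox N e := by
      have hfst : e.fst = u ∨ e.fst = w := by
        rcases hor with ⟨h1, h2⟩ | ⟨h1, h2⟩
        · exact Or.inl h1.symm
        · exact Or.inr h2.symm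
      have hsnd' : e.snd = u ∨ e.snd = w := by
        rcases hor with ⟨h1, h2⟩ | ⟨h1, h2⟩
        · exact Or.inr h2.symm
        · exact Or.inl h1.symm
      constructor
      · rcases hfst with h | h <;> rw [h, VN, Set.mem_setOf_eq, abs_le, abs_le] <;> omega
      · rcases hsnd' with h | h <;> rw [h, VN, Set.mem_setOf_eq, abs_le, abs_le] <;> omega
    have hends : e.ends = s(u, w) := by
      rcases hor with ⟨h1, h2⟩ | ⟨h1, h2⟩
      · rw [h1, h2]; exact rfl
      · rw [h1, h2]; exact Sym2.eq_swap
    have hadj : (openGraphN N ω).Adj u w := graphOf_adj_of_ends ⟨hbox, hωe⟩ hends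
    exact hWAc w hwW (hAadj u w huA hadj)
  -- edges with both endpoints outside A are not in γ
  have hnocross : ∀ (a b : ℤ × ℤ) (e : LatticeEdge), a ∉ A → b ∉ A → e.ends = s(a, b) →
      e ∉ γ := by
    intro a b e ha hb hends hmem
    obtain ⟨u, w, hor, huA, _⟩ := hcrossA e hmem
    rcases ends_cases hends with ⟨h1, h2⟩ | ⟨h1, h2⟩ <;> rcases hor with ⟨h3, h4⟩ | ⟨h3, h4⟩
    · exact ha (by rw [h1, ← h3]; exact huA)
    · exact hb (by rw [h2, ← h3]; exact huA)
    · exact hb (by rw [h2, ← h3]; exact huA)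
    · exact ha (by rw [h1, ← h3]; exact huA)
  -- edges with both endpoints in I are not in γ
  have hnoγI : ∀ (a b : ℤ × ℤ) (e : LatticeEdge), a ∈ I → b ∈ I → e.ends = s(a, b) →
      e ∉ γ := by
    intro a b e ha hb hends hmem
    rw [hγmem] at hmem
    have hWor : e.fst ∈ W ∨ e.snd ∈ W := by
      rcases hmem with ⟨_, h⟩ | ⟨h, _⟩
      · exact Or.inr h
      · exact Or.inl h
    rcases ends_cases hends with ⟨h1, h2⟩ | ⟨h1, h2⟩ <;> rcases hWor with hWm | hWm
    · exact ha (by rw [h1]; exact hWm)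
    · exact hb (by rw [h2]; exact hWm)
    · exact hb (by rw [h2]; exact hWm)
    · exact ha (by rw [h1]; exact hWm)
  -- adjacency in complGraph γ keeps I
  have hIadj : ∀ a b : ℤ × ℤ, a ∈ I → (complGraph γ).Adj a b → b ∈ I := by
    intro a b ha hadj
    obtain ⟨hne, e, henot, hends⟩ := hadj
    by_contra hbI
    have hbW : b ∈ W := not_not.mp hbI
    apply henot
    show e ∈ γ
    rw [hγmem]
    rcases ends_cases hends with ⟨h1, h2⟩ | ⟨h1, h2⟩
    · exact Or.inl ⟨h1 ▸ ha, h2 ▸ hbW⟩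
    · exact Or.inr ⟨h2 ▸ hbW, h1 ▸ ha⟩
  -- Aᶜ-paths give reachability in complGraph γ
  have hAcReach : ∀ u v : ℤ × ℤ, ReachIn Aᶜ u v → (complGraph γ).Reachable u v := by
    intro u v h
    refine h.to_reachable (fun a b e ha hb hends => graphOf_adj_of_ends ?_ hends)
    exact hnocross a b e ha hb hends
  -- W is infinite
  have hWinf : W.Infinite := by
    refine Set.infinite_of_injective_forall_mem
      (f := fun n : ℕ => (((M + 1 + n : ℤ), (M + 1 : ℤ)) : ℤ × ℤ)) ?_ ?_
    · intro m n hmn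
      simp only [Prod.mk.injEq] at hmn
      omega
    · intro n
      exact houter (((M + 1 + n : ℤ), (M + 1 : ℤ)) : ℤ × ℤ) (Or.inl (by omega))
  -- the open graph is a subgraph of complGraph γ
  have hle : openGraphN N ω ≤ complGraph γ := by
    intro a b hadj
    obtain ⟨hne, e, ⟨hbox, hopen⟩, hends⟩ := hadj
    refine ⟨hne, e, ?_, hends⟩
    intro hmem
    rw [hclosed e hmem] at hopen
    exact Bool.false_ne_true hopen
  -- x reaches every vertex of I in complGraph γ
  have hreachI : ∀ v ∈ I, (complGraph γ).Reachable x v := by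
    intro v hv
    by_cases hvA : v ∈ A
    · exact ((hmemA v).mp hvA).mono hle
    · rcases reach_enter (T := A) (reach_univ v x) hvA with hr | ⟨a, haA, b, hbA, ⟨e, hends⟩, hr⟩
      · exact absurd hr.mem_right (not_not.mpr hxA)
      · have hbI : b ∈ I := fun hbW => hv (hr.trans hbW)
        have h1 : (complGraph γ).Reachable v b := hAcReach v b hr
        have h2 : (complGraph γ).Adj b a :=
          graphOf_adj_of_ends (show e ∈ {f | f ∉ γ} from hnoγI b a e hbI (hAI a haA) hends)
            hends
        have h3 : (complGraph γ).Reachable x a := ((hmemA a).mp haA).mono hle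
        exact (h3.trans h2.reachable.symm).trans h1.symm
  -- the component of x is exactly I
  set D := (complGraph γ).connectedComponentMk x with hDdef
  have hDsupp : D.supp = I := by
    ext v
    rw [SimpleGraph.ConnectedComponent.mem_supp_iff]
    constructor
    · intro h
      have hr : (complGraph γ).Reachable x v :=
        (SimpleGraph.ConnectedComponent.eq.mp h).symm
      obtain ⟨w⟩ := hr
      exact walk_stays hIadj w (hAI x hxA)
    · intro hv
      exact SimpleGraph.ConnectedComponent.eq.mpr (hreachI v hv).symm
  have hDfin : D.supp.Finite := hDsupp ▸ hIfin
  -- uniqueness of the finite component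
  have huniq : ∀ C' : (complGraph γ).ConnectedComponent, C'.supp.Finite → C' = D := by
    intro C' hfin
    obtain ⟨v, rfl⟩ := C'.exists_rep
    by_cases hvI : v ∈ I
    · exact SimpleGraph.ConnectedComponent.eq.mpr ((hreachI v hvI).symm)
    · exfalso
      have hvW : v ∈ W := not_not.mp hvI
      have hWsub : W ⊆ ((complGraph γ).connectedComponentMk v).supp := by
        intro w hw
        rw [SimpleGraph.ConnectedComponent.mem_supp_iff]
        exact SimpleGraph.ConnectedComponent.eq.mpr
          ((hAcReach w corner hw).trans (hAcReach v corner hvW).symm)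
      exact (hWinf.mono hWsub) hfin
  -- minimality
  have hmin : ∀ e ∈ γ, ∀ C' : (graphOf {f | f ∉ γ ∨ f = e}).ConnectedComponent,
      ¬ C'.supp.Finite := by
    intro e he C' hfin
    have hle' : complGraph γ ≤ graphOf {f | f ∉ γ ∨ f = e} := by
      intro a b hadj
      obtain ⟨hne, f, hf, hends⟩ := hadj
      exact ⟨hne, f, Or.inl hf, hends⟩
    obtain ⟨u, w, hor, huA, hwW⟩ := hcrossA e he
    have huI : u ∈ I := hAI u huA
    have hends : e.ends = s(u, w) := by
      rcases hor with ⟨h1, h2⟩ | ⟨h1, h2⟩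
      · rw [h1, h2]; exact rfl
      · rw [h1, h2]; exact Sym2.eq_swap
    have hadj : (graphOf {f | f ∉ γ ∨ f = e}).Adj u w :=
      graphOf_adj_of_ends (Or.inr rfl) hends
    have hall : ∀ v : ℤ × ℤ, (graphOf {f | f ∉ γ ∨ f = e}).Reachable v corner := by
      intro v
      by_cases hvI : v ∈ I
      · have r1 : (complGraph γ).Reachable v u := (hreachI v hvI).symm.trans (hreachI u huI)
        exact ((r1.mono hle').trans hadj.reachable).trans ((hAcReach w corner hwW).mono hle')
      · exact (hAcReach v corner (not_not.mp hvI)).mono hle'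
    obtain ⟨v, rfl⟩ := C'.exists_rep
    have hWsub : W ⊆ ((graphOf {f | f ∉ γ ∨ f = e}).connectedComponentMk v).supp := by
      intro w' hw'
      rw [SimpleGraph.ConnectedComponent.mem_supp_iff]
      exact SimpleGraph.ConnectedComponent.eq.mpr ((hall w').trans (hall v).symm)
    exact (hWinf.mono hWsub) hfin
  refine ⟨γ, ⟨⟨⟨D, hDfin, fun C' hC' => huniq C' hC'⟩, hmin⟩, ⟨D, hDfin, ?_⟩⟩, hclosed⟩
  intro v hv
  rw [hDsupp]
  rcases hv with rfl | rfl
  · exact hAI v hxA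
  · exact hAI v hyA

end PeierlsAux

/-- Peierls bound. For `N ≥ 1`, `x, y ∈ V_N ∖ ∂_v^int V_N` and
`p_h, p_v ∈ (0,1)`:
`τ^{f,N}_p(x,y) ≤ Σ_{γ ∈ Γ_{{x,y}}} λ_h^{|γ ∩ Eʰ|} λ_v^{|γ ∩ Eᵛ|}`. -/
theorem tauFN_peierls_bound (N : ℕ) (hN : 1 ≤ N) (x y : ℤ × ℤ)
    (hx : x ∈ VN N \ intBdry N) (hy : y ∈ VN N \ intBdry N)
    (ph pv : ℝ) (h1 : 0 < ph) (h2 : ph < 1) (h3 : 0 < pv) (h4 : pv < 1)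
    (P : Measure (LatticeEdge → Bool)) (hP : IsBernoulliProduct ph pv P) :
    P {ω | FiniteVolEvent N x y ω} ≤
      ∑' γ : {γ : Finset LatticeEdge // Surrounds γ {x, y}},
        ENNReal.ofReal (lam ph) ^ hCount γ.1 * ENNReal.ofReal (lam pv) ^ vCount γ.1 := by
  classical
  obtain ⟨hprob, hcyl⟩ := hP
  have hsub : {ω | FiniteVolEvent N x y ω} ⊆
      ⋃ γ : {γ : Finset LatticeEdge // Surrounds γ {x, y}},
        {ω : LatticeEdge → Bool | ∀ e ∈ γ.1, ω e = false} := by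
    intro ω hω
    obtain ⟨γ, hγ, hcl⟩ := PeierlsAux.exists_closed_contour N hN x y hx hy ω hω
    exact Set.mem_iUnion.mpr ⟨⟨γ, hγ⟩, hcl⟩
  refine le_trans (measure_mono hsub)
    (le_trans (measure_iUnion_le _) (ENNReal.tsum_le_tsum ?_))
  rintro ⟨γ, hγ⟩
  have hmeas : P {ω : LatticeEdge → Bool | ∀ e ∈ γ, ω e = false} =
      ∏ e ∈ γ, ENNReal.ofReal (1 - edgeProb ph pv e) := by
    have h := hcyl γ (fun _ => false)
    simpa using h
  have hsplit : ∏ e ∈ γ, ENNReal.ofReal (1 - edgeProb ph pv e) =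
      ENNReal.ofReal (1 - ph) ^ hCount γ * ENNReal.ofReal (1 - pv) ^ vCount γ := by
    rw [← Finset.prod_filter_mul_prod_filter_not γ (fun e => e.horiz = true)]
    congr 1
    · rw [Finset.prod_congr rfl (fun e he => ?_), Finset.prod_const, hCount]
      rw [Finset.mem_filter] at he
      simp [edgeProb, he.2]
    · rw [Finset.prod_congr rfl (fun e he => ?_), Finset.prod_const]
      · congr 1
        rw [vCount]
        congr 1
        ext e
        simp [Bool.not_eq_true]
      · rw [Finset.mem_filter] at he
        have : e.horiz = false := by revert he; cases e.horiz <;> simp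
        simp [edgeProb, this]
  have hlamh : ENNReal.ofReal (1 - ph) ≤ ENNReal.ofReal (lam ph) := by
    apply ENNReal.ofReal_le_ofReal
    rw [lam, le_div_iff₀ h1]
    nlinarith
  have hlamv : ENNReal.ofReal (1 - pv) ≤ ENNReal.ofReal (lam pv) := by
    apply ENNReal.ofReal_le_ofReal
    rw [lam, le_div_iff₀ h3]
    nlinarith
  calc P {ω : LatticeEdge → Bool | ∀ e ∈ γ, ω e = false}
      = ENNReal.ofReal (1 - ph) ^ hCount γ * ENNReal.ofReal (1 - pv) ^ vCount γ := by
        rw [hmeas, hsplit]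
    _ ≤ ENNReal.ofReal (lam ph) ^ hCount γ * ENNReal.ofReal (lam pv) ^ vCount γ := by
        gcongr
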